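/- Let ε' ∈ (0, π/2], b ∈ (0,1], τ₀ ∈ ℝ, and suppose ε' ± τ₀ and f⁻¹(ε') ± τ₀ lie in the domain of h(x) = arccos(cos(x)/b), where f⁻¹(x) = arcsin(sin(x)/sin(απ/2)) with 0 < α ≤ 1 and ε' < απ/2. If −h(ε' ± τ₀) ≤ τ ± ω ≤ h(ε' ± τ₀) holds for both signs, then −h(f⁻¹(ε') ± τ₀) ≤ f⁻¹(τ) ± ω ≤ h(f⁻¹(ε') ± τ₀) for both signs, provided |τ| ≤ ε'. -/

import Mathlib

open Real Set

/-- The domain of `h x = arccos (cos x / b)`. -/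
def hDom (b : ℝ) : Set ℝ := {x ∈ Set.Ioo (0 : ℝ) π | |Real.cos x| ≤ b}

lemma gsub_mono {a : ℝ} (ha0 : 0 < a) (ha2 : a ≤ π / 2) :
    MonotoneOn (fun x => Real.arcsin (Real.sin x / Real.sin a) - x) (Icc (-a) a) := by
  set s := Real.sin a with hs
  have hpi := Real.pi_pos
  have hs0 : 0 < s := Real.sin_pos_of_pos_of_lt_pi ha0 (by linarith)
  have hs1 : s ≤ 1 := Real.sin_le_one a
  have habs : ∀ x ∈ Ioo (-a) a, |Real.sin x| < s := by
    intro x hx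
    rw [abs_lt]
    constructor
    · have := Real.sin_lt_sin_of_lt_of_le_pi_div_two
        (by linarith [hx.1, hx.2] : -(π/2) ≤ -x) ha2 (by linarith [hx.1] : -x < a)
      rw [Real.sin_neg] at this; linarith
    · exact Real.sin_lt_sin_of_lt_of_le_pi_div_two (by linarith [hx.1] : -(π/2) ≤ x) ha2 hx.2
  apply monotoneOn_of_hasDerivWithinAt_nonneg (convex_Icc _ _)
    (f' := fun x => Real.cos x / s * (1 / Real.sqrt (1 - (Real.sin x / s) ^ 2)) - 1)
  · exact ((Real.continuous_arcsin.comp (continuous_sin.div_const s)).sub continuous_id).continuousOn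
  · intro x hx
    rw [interior_Icc] at hx
    have hxlt := habs x hx
    have hlt1 : |Real.sin x / s| < 1 := by
      rw [abs_div, abs_of_pos hs0, div_lt_one hs0]; exact hxlt
    rw [abs_lt] at hlt1
    have hd : HasDerivAt (fun x => Real.arcsin (Real.sin x / s) - x)
        (Real.cos x / s * (1 / Real.sqrt (1 - (Real.sin x / s) ^ 2)) - 1) x := by
      have h1 : HasDerivAt (fun x => Real.sin x / s) (Real.cos x / s) x :=
        (Real.hasDerivAt_sin x).div_const s
      have h2 := (Real.hasDerivAt_arcsin (ne_of_gt hlt1.1) (ne_of_lt hlt1.2)).comp x h1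
      have h3 := h2.sub (hasDerivAt_id x)
      exact h3.congr_deriv (by ring)
    exact hd.hasDerivWithinAt
  · intro x hx
    rw [interior_Icc] at hx
    have hxlt := habs x hx
    have hcos : 0 < Real.cos x := Real.cos_pos_of_mem_Ioo ⟨by linarith [hx.1], by linarith [hx.2]⟩
    have hu2 : (Real.sin x / s) ^ 2 < 1 := by
      rw [div_pow, div_lt_one (by positivity)]
      nlinarith [abs_nonneg (Real.sin x), sq_abs (Real.sin x)]
    have hsq : 0 < Real.sqrt (1 - (Real.sin x / s) ^ 2) := Real.sqrt_pos.2 (by linarith)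
    have key : s * Real.sqrt (1 - (Real.sin x / s) ^ 2) ≤ Real.cos x := by
      have heq : s * Real.sqrt (1 - (Real.sin x / s) ^ 2) = Real.sqrt (s ^ 2 - Real.sin x ^ 2) := by
        rw [← Real.sqrt_sq hs0.le, ← Real.sqrt_mul (by positivity)]
        congr 1
        field_simp
        rw [Real.sq_sqrt (sq_nonneg s)]
      rw [heq]
      have h1 : s ^ 2 - Real.sin x ^ 2 ≤ Real.cos x ^ 2 := by
        have := Real.sin_sq_add_cos_sq x
        nlinarith
      calc Real.sqrt (s ^ 2 - Real.sin x ^ 2) ≤ Real.sqrt (Real.cos x ^ 2) :=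
            Real.sqrt_le_sqrt h1
        _ = Real.cos x := Real.sqrt_sq hcos.le
    rw [sub_nonneg, mul_one_div, div_div, le_div_iff₀ (by positivity), one_mul]
    exact key

lemma hsub_mono {b : ℝ} (hb0 : 0 < b) (hb1 : b ≤ 1) :
    MonotoneOn (fun x => Real.arccos (Real.cos x / b) - x)
      (Icc (Real.arccos b) (π - Real.arccos b)) := by
  have hpi := Real.pi_pos
  have harc0 : 0 ≤ Real.arccos b := Real.arccos_nonneg b
  have harc2 : Real.arccos b < π / 2 := Real.arccos_lt_pi_div_two.2 hb0
  have hcab : Real.cos (Real.arccos b) = b := Real.cos_arccos (by linarith) hb1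
  have habs : ∀ x ∈ Ioo (Real.arccos b) (π - Real.arccos b), |Real.cos x| < b := by
    intro x hx
    rw [abs_lt]
    have hsa : StrictAntiOn Real.cos (Icc 0 π) := Real.strictAntiOn_cos
    constructor
    · have := hsa ⟨by linarith [hx.1], by linarith [hx.2]⟩
        ⟨by linarith, by linarith⟩ hx.2
      rw [Real.cos_pi_sub, hcab] at this; linarith
    · have := hsa ⟨harc0, by linarith⟩ ⟨by linarith [hx.1], by linarith [hx.2]⟩ hx.1
      rw [hcab] at this; linarith
  apply monotoneOn_of_hasDerivWithinAt_nonneg (convex_Icc _ _)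
    (f' := fun x => -Real.sin x / b * -(1 / Real.sqrt (1 - (Real.cos x / b) ^ 2)) - 1)
  · exact ((Real.continuous_arccos.comp (Real.continuous_cos.div_const b)).sub
      continuous_id).continuousOn
  · intro x hx
    rw [interior_Icc] at hx
    have hxlt := habs x hx
    have hlt1 : |Real.cos x / b| < 1 := by
      rw [abs_div, abs_of_pos hb0, div_lt_one hb0]; exact hxlt
    rw [abs_lt] at hlt1
    have hd : HasDerivAt (fun x => Real.arccos (Real.cos x / b) - x)
        (-Real.sin x / b * -(1 / Real.sqrt (1 - (Real.cos x / b) ^ 2)) - 1) x := by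
      have h1 : HasDerivAt (fun x => Real.cos x / b) (-Real.sin x / b) x :=
        (Real.hasDerivAt_cos x).div_const b
      have h2 := (Real.hasDerivAt_arccos (ne_of_gt hlt1.1) (ne_of_lt hlt1.2)).comp x h1
      have h3 := h2.sub (hasDerivAt_id x)
      exact h3.congr_deriv (by ring)
    exact hd.hasDerivWithinAt
  · intro x hx
    rw [interior_Icc] at hx
    have hxlt := habs x hx
    have hsin : 0 < Real.sin x :=
      Real.sin_pos_of_pos_of_lt_pi (by linarith [hx.1]) (by linarith [hx.2])
    have hu2 : (Real.cos x / b) ^ 2 < 1 := by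
      rw [div_pow, div_lt_one (by positivity)]
      nlinarith [abs_nonneg (Real.cos x), sq_abs (Real.cos x)]
    have hsq : 0 < Real.sqrt (1 - (Real.cos x / b) ^ 2) := Real.sqrt_pos.2 (by linarith)
    have key : b * Real.sqrt (1 - (Real.cos x / b) ^ 2) ≤ Real.sin x := by
      have heq : b * Real.sqrt (1 - (Real.cos x / b) ^ 2)
          = Real.sqrt (b ^ 2 - Real.cos x ^ 2) := by
        rw [← Real.sqrt_sq hb0.le, ← Real.sqrt_mul (by positivity)]
        congr 1
        field_simp
        rw [Real.sq_sqrt (sq_nonneg b)]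
      rw [heq]
      have h1 : b ^ 2 - Real.cos x ^ 2 ≤ Real.sin x ^ 2 := by
        have := Real.sin_sq_add_cos_sq x
        nlinarith
      calc Real.sqrt (b ^ 2 - Real.cos x ^ 2) ≤ Real.sqrt (Real.sin x ^ 2) :=
            Real.sqrt_le_sqrt h1
        _ = Real.sin x := Real.sqrt_sq hsin.le
    have hrw : -Real.sin x / b * -(1 / Real.sqrt (1 - (Real.cos x / b) ^ 2))
        = Real.sin x / (b * Real.sqrt (1 - (Real.cos x / b) ^ 2)) := by
      field_simp
    rw [sub_nonneg, hrw, le_div_iff₀ (by positivity), one_mul]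
    exact key

lemma hDom_subset {b : ℝ} (hb0 : 0 < b) (hb1 : b ≤ 1) :
    hDom b ⊆ Icc (Real.arccos b) (π - Real.arccos b) := by
  rintro x ⟨hx1, hx2⟩
  rw [abs_le] at hx2
  have h1 : -(1:ℝ) ≤ Real.cos x := Real.neg_one_le_cos x
  have h2 : Real.cos x ≤ 1 := Real.cos_le_one x
  have hmono := Real.monotone_arcsin
  constructor
  · have := hmono hx2.2
    have hx := Real.arccos_cos hx1.1.le hx1.2.le
    simp only [Real.arccos] at hx ⊢
    linarith [hmono hx2.2, hx]
  · have hx := Real.arccos_cos hx1.1.le hx1.2.le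
    have h3 := hmono hx2.1
    rw [Real.arcsin_neg] at h3
    simp only [Real.arccos] at hx ⊢
    linarith

theorem wedge_inclusion_transfer (α b ε' τ₀ τ ω : ℝ)
    (hα0 : 0 < α) (hα1 : α ≤ 1) (hb0 : 0 < b) (hb1 : b ≤ 1)
    (hε'0 : 0 < ε') (hε'2 : ε' ≤ π / 2) (hε'α : ε' < α * π / 2)
    (hdp : ε' + τ₀ ∈ hDom b) (hdm : ε' - τ₀ ∈ hDom b)
    (hdp' : Real.arcsin (Real.sin ε' / Real.sin (α * π / 2)) + τ₀ ∈ hDom b)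
    (hdm' : Real.arcsin (Real.sin ε' / Real.sin (α * π / 2)) - τ₀ ∈ hDom b)
    (hτ : |τ| ≤ ε')
    (h1 : -Real.arccos (Real.cos (ε' + τ₀) / b) ≤ τ + ω)
    (h2 : τ + ω ≤ Real.arccos (Real.cos (ε' + τ₀) / b))
    (h3 : -Real.arccos (Real.cos (ε' - τ₀) / b) ≤ τ - ω)
    (h4 : τ - ω ≤ Real.arccos (Real.cos (ε' - τ₀) / b)) :
    (-Real.arccos (Real.cos (Real.arcsin (Real.sin ε' / Real.sin (α * π / 2)) + τ₀) / b)
        ≤ Real.arcsin (Real.sin τ / Real.sin (α * π / 2)) + ω ∧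
      Real.arcsin (Real.sin τ / Real.sin (α * π / 2)) + ω
        ≤ Real.arccos (Real.cos (Real.arcsin (Real.sin ε' / Real.sin (α * π / 2)) + τ₀) / b)) ∧
    (-Real.arccos (Real.cos (Real.arcsin (Real.sin ε' / Real.sin (α * π / 2)) - τ₀) / b)
        ≤ Real.arcsin (Real.sin τ / Real.sin (α * π / 2)) - ω ∧
      Real.arcsin (Real.sin τ / Real.sin (α * π / 2)) - ω
        ≤ Real.arccos (Real.cos (Real.arcsin (Real.sin ε' / Real.sin (α * π / 2)) - τ₀) / b)) := by
  have hpi := Real.pi_pos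
  set a := α * π / 2 with ha
  have ha0 : 0 < a := by positivity
  have ha2 : a ≤ π / 2 := by
    rw [ha]; nlinarith
  set s := Real.sin a with hs
  have hs0 : 0 < s := Real.sin_pos_of_pos_of_lt_pi ha0 (by linarith)
  have hs1 : s ≤ 1 := Real.sin_le_one a
  set E := Real.arcsin (Real.sin ε' / s) with hE
  set T := Real.arcsin (Real.sin τ / s) with hT
  rw [abs_le] at hτ
  have hgm := gsub_mono ha0 ha2
  -- memberships in Icc (-a) a
  have hmem : ∀ x : ℝ, -ε' ≤ x → x ≤ ε' → x ∈ Icc (-a) a := by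
    intro x hx1 hx2; exact ⟨by linarith, by linarith⟩
  -- g(-ε') = -E
  have hodd : Real.arcsin (Real.sin (-ε') / s) = -E := by
    rw [Real.sin_neg, neg_div, Real.arcsin_neg, hE]
  -- A1 : T - τ ≤ E - ε'
  have hA1 : T - τ ≤ E - ε' := hgm (hmem τ hτ.1 hτ.2) (hmem ε' (by linarith) le_rfl) hτ.2
  -- A2 : ε' - E ≤ T - τ
  have hA2 : ε' - E ≤ T - τ := by
    have := hgm (hmem (-ε') le_rfl (by linarith)) (hmem τ hτ.1 hτ.2) hτ.1
    simp only [← hs] at this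
    rw [show ((fun x => Real.arcsin (Real.sin x / s) - x) (-ε') ≤ (fun x => Real.arcsin (Real.sin x / s) - x) τ) = (Real.arcsin (Real.sin (-ε') / s) - (-ε') ≤ Real.arcsin (Real.sin τ / s) - τ) from rfl, hodd] at this
    linarith
  -- ε' ≤ E
  have hεE : ε' ≤ E := by
    have hsinε : 0 ≤ Real.sin ε' := Real.sin_nonneg_of_nonneg_of_le_pi hε'0.le (by linarith)
    have : Real.sin ε' ≤ Real.sin ε' / s := by
      rw [le_div_iff₀ hs0]; nlinarith
    have h := Real.monotone_arcsin this
    rw [Real.arcsin_sin (by linarith) hε'2] at h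
    exact h
  -- h monotonicity
  have hhm := hsub_mono hb0 hb1
  have hsub := hDom_subset hb0 hb1
  have hB1 : Real.arccos (Real.cos (ε' + τ₀) / b) - (ε' + τ₀)
      ≤ Real.arccos (Real.cos (E + τ₀) / b) - (E + τ₀) :=
    hhm (hsub hdp) (hsub hdp') (by linarith)
  have hB2 : Real.arccos (Real.cos (ε' - τ₀) / b) - (ε' - τ₀)
      ≤ Real.arccos (Real.cos (E - τ₀) / b) - (E - τ₀) :=
    hhm (hsub hdm) (hsub hdm') (by linarith)
  refine ⟨⟨by linarith, by linarith⟩, ⟨by linarith, by linarith⟩⟩
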